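/- The sum over all pairs (p, q) of odd positive integers with gcd(p, q) = 1 of 1/(p²·q²) equals 3/2: Σ_{p,q ≥ 1 odd, gcd(p,q)=1} 1/(p²q²) = 3/2. -/

import Mathlib

open Real

/-- Sum of `1/(2k+1)^2` is `π²/8`. -/
lemma hasSum_odd_sq_inv : HasSum (fun k : ℕ => (1 : ℝ) / ((2 * k + 1 : ℕ) : ℝ) ^ 2) (π ^ 2 / 8) := by
  have htot := hasSum_zeta_two
  have heven : HasSum (fun k : ℕ => (1 : ℝ) / ((2 * k : ℕ) : ℝ) ^ 2) (1 / 4 * (π ^ 2 / 6)) := by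
    have h := hasSum_zeta_two.mul_left ((1 : ℝ) / 4)
    have hfun : (fun k : ℕ => (1 : ℝ) / ((2 * k : ℕ) : ℝ) ^ 2)
        = fun k : ℕ => 1 / 4 * ((1 : ℝ) / (k : ℝ) ^ 2) := by
      funext k; push_cast; ring
    rw [hfun]; exact h
  have hsummable : Summable (fun k : ℕ => (1 : ℝ) / ((2 * k + 1 : ℕ) : ℝ) ^ 2) := by
    have : Function.Injective (fun k : ℕ => 2 * k + 1) := by
      intro a b h; dsimp at h; omega
    exact htot.summable.comp_injective this
  have hodd := hsummable.hasSum
  have := HasSum.even_add_odd (f := fun n : ℕ => (1 : ℝ) / (n : ℝ) ^ 2) heven hodd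
  have hval := htot.unique this
  have : (∑' k : ℕ, (1 : ℝ) / ((2 * k + 1 : ℕ) : ℝ) ^ 2) = π ^ 2 / 8 := by linarith
  rwa [this] at hodd

/-- Sum of `1/(2k+1)^4` is `π⁴/96`. -/
lemma hasSum_odd_four_inv :
    HasSum (fun k : ℕ => (1 : ℝ) / ((2 * k + 1 : ℕ) : ℝ) ^ 4) (π ^ 4 / 96) := by
  have htot := hasSum_zeta_four
  have heven : HasSum (fun k : ℕ => (1 : ℝ) / ((2 * k : ℕ) : ℝ) ^ 4) (1 / 16 * (π ^ 4 / 90)) := by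
    have h := hasSum_zeta_four.mul_left ((1 : ℝ) / 16)
    have hfun : (fun k : ℕ => (1 : ℝ) / ((2 * k : ℕ) : ℝ) ^ 4)
        = fun k : ℕ => 1 / 16 * ((1 : ℝ) / (k : ℝ) ^ 4) := by
      funext k; push_cast; ring
    rw [hfun]; exact h
  have hsummable : Summable (fun k : ℕ => (1 : ℝ) / ((2 * k + 1 : ℕ) : ℝ) ^ 4) := by
    have : Function.Injective (fun k : ℕ => 2 * k + 1) := by
      intro a b h; dsimp at h; omega
    exact htot.summable.comp_injective this
  have hodd := hsummable.hasSum
  have := HasSum.even_add_odd (f := fun n : ℕ => (1 : ℝ) / (n : ℝ) ^ 4) heven hodd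
  have hval := htot.unique this
  have : (∑' k : ℕ, (1 : ℝ) / ((2 * k + 1 : ℕ) : ℝ) ^ 4) = π ^ 4 / 96 := by linarith
  rwa [this] at hodd

/-- The equivalence between `ℕ × ℕ` and odd pairs. -/
def oddPairEquiv : ℕ × ℕ ≃ {pq : ℕ × ℕ // Odd pq.1 ∧ Odd pq.2} where
  toFun kl := ⟨(2 * kl.1 + 1, 2 * kl.2 + 1), ⟨⟨kl.1, by omega⟩, ⟨kl.2, by omega⟩⟩⟩
  invFun x := (x.1.1 / 2, x.1.2 / 2)
  left_inv kl := by obtain ⟨k, l⟩ := kl; simp only [Prod.mk.injEq]; omega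
  right_inv x := by
    obtain ⟨⟨a, b⟩, ⟨m, hm⟩, ⟨n, hn⟩⟩ := x
    ext <;> simp <;> omega

/-- The coprime-scaling equivalence. -/
noncomputable def coprimeScaleEquiv :
    ℕ × {pq : ℕ × ℕ // Odd pq.1 ∧ Odd pq.2 ∧ Nat.gcd pq.1 pq.2 = 1} ≃
      {pq : ℕ × ℕ // Odd pq.1 ∧ Odd pq.2} :=
  Equiv.ofBijective
    (fun kt => ⟨((2 * kt.1 + 1) * kt.2.1.1, (2 * kt.1 + 1) * kt.2.1.2),
      Nat.odd_mul.2 ⟨⟨kt.1, by omega⟩, kt.2.2.1⟩,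
      Nat.odd_mul.2 ⟨⟨kt.1, by omega⟩, kt.2.2.2.1⟩⟩)
    (by
      constructor
      · rintro ⟨k, ⟨⟨p, q⟩, hp, hq, hg⟩⟩ ⟨k', ⟨⟨p', q'⟩, hp', hq', hg'⟩⟩ h
        simp only [Subtype.mk.injEq, Prod.mk.injEq] at h
        obtain ⟨h1, h2⟩ := h
        have hgcd : (2 * k + 1) = (2 * k' + 1) := by
          have e1 : Nat.gcd ((2 * k + 1) * p) ((2 * k + 1) * q) = 2 * k + 1 := by
            rw [Nat.gcd_mul_left, hg, mul_one]
          have e2 : Nat.gcd ((2 * k' + 1) * p') ((2 * k' + 1) * q') = 2 * k' + 1 := by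
            rw [Nat.gcd_mul_left, hg', mul_one]
          rw [h1, h2, e2] at e1
          exact e1.symm
        have hk : k = k' := by omega
        subst hk
        have hpe : p = p' := Nat.eq_of_mul_eq_mul_left (by omega) h1
        have hqe : q = q' := Nat.eq_of_mul_eq_mul_left (by omega) h2
        simp [hpe, hqe]
      · rintro ⟨⟨a, b⟩, ha, hb⟩
        have ha0 : a ≠ 0 := by rintro rfl; simp at ha
        set d := Nat.gcd a b with hd
        have hdpos : 0 < d := Nat.gcd_pos_of_pos_left _ (Nat.pos_of_ne_zero ha0)
        have hda : d ∣ a := Nat.gcd_dvd_left a b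
        have hdb : d ∣ b := Nat.gcd_dvd_right a b
        have hdodd : Odd d := by
          obtain ⟨c, hc⟩ := hda
          rw [hc] at ha
          exact (Nat.odd_mul.1 ha).1
        obtain ⟨k, hk⟩ := hdodd
        have hda' : d * (a / d) = a := Nat.mul_div_cancel' hda
        have hdb' : d * (b / d) = b := Nat.mul_div_cancel' hdb
        have hpodd : Odd (a / d) := by
          rw [← hda'] at ha; exact (Nat.odd_mul.1 ha).2
        have hqodd : Odd (b / d) := by
          rw [← hdb'] at hb; exact (Nat.odd_mul.1 hb).2
        refine ⟨⟨k, ⟨(a / d, b / d), hpodd, hqodd, Nat.coprime_div_gcd_div_gcd hdpos⟩⟩, ?_⟩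
        have hdk : 2 * k + 1 = d := by omega
        ext <;> simp [hdk, hda', hdb'])

set_option maxHeartbeats 2000000 in
theorem sum_coprime_odd_pairs :
    HasSum
      (fun pq : {pq : ℕ × ℕ // Odd pq.1 ∧ Odd pq.2 ∧ Nat.gcd pq.1 pq.2 = 1} =>
        1 / (((pq : ℕ × ℕ).1 : ℝ) ^ 2 * ((pq : ℕ × ℕ).2 : ℝ) ^ 2))
      (3 / 2) := by
  have h1 : ∀ k : ℕ, (0:ℝ) ≤ (1 : ℝ) / ((2 * k + 1 : ℕ) : ℝ) ^ 2 := fun k => by positivity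
  have h4 : ∀ k : ℕ, (0:ℝ) ≤ (1 : ℝ) / ((2 * k + 1 : ℕ) : ℝ) ^ 4 := fun k => by positivity
  -- Step A : the sum over all odd pairs
  have hFsum : HasSum (fun x : {pq : ℕ × ℕ // Odd pq.1 ∧ Odd pq.2} =>
      1 / ((x.1.1 : ℝ) ^ 2 * (x.1.2 : ℝ) ^ 2)) (π ^ 4 / 64) := by
    rw [← oddPairEquiv.hasSum_iff]
    have hmul := hasSum_odd_sq_inv.mul hasSum_odd_sq_inv
      (Summable.mul_of_nonneg hasSum_odd_sq_inv.summable hasSum_odd_sq_inv.summable h1 h1)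
    have heq : ((fun x : {pq : ℕ × ℕ // Odd pq.1 ∧ Odd pq.2} =>
        1 / ((x.1.1 : ℝ) ^ 2 * (x.1.2 : ℝ) ^ 2)) ∘ oddPairEquiv) = fun kl : ℕ × ℕ =>
        ((1 : ℝ) / ((2 * kl.1 + 1 : ℕ) : ℝ) ^ 2) * ((1 : ℝ) / ((2 * kl.2 + 1 : ℕ) : ℝ) ^ 2) := by
      funext kl
      simp only [Function.comp, oddPairEquiv, Equiv.coe_fn_mk]
      rw [div_mul_div_comm, one_mul]
    rw [heq]
    convert hmul using 1
    · rfl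
    · ring
  -- the target function is summable
  have hι : Function.Injective
      (fun t : {pq : ℕ × ℕ // Odd pq.1 ∧ Odd pq.2 ∧ Nat.gcd pq.1 pq.2 = 1} =>
        (⟨t.1, t.2.1, t.2.2.1⟩ : {pq : ℕ × ℕ // Odd pq.1 ∧ Odd pq.2})) := by
    rintro ⟨x, hx⟩ ⟨y, hy⟩ h
    exact Subtype.ext (by simpa using congrArg Subtype.val h)
  have hfs : Summable (fun pq : {pq : ℕ × ℕ // Odd pq.1 ∧ Odd pq.2 ∧ Nat.gcd pq.1 pq.2 = 1} =>
      1 / (((pq : ℕ × ℕ).1 : ℝ) ^ 2 * ((pq : ℕ × ℕ).2 : ℝ) ^ 2)) := by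
    refine (hFsum.summable.comp_injective hι).congr ?_
    rintro ⟨⟨p, q⟩, h'⟩
    rfl
  have hfnonneg : ∀ t : {pq : ℕ × ℕ // Odd pq.1 ∧ Odd pq.2 ∧ Nat.gcd pq.1 pq.2 = 1},
      (0:ℝ) ≤ 1 / (((t : ℕ × ℕ).1 : ℝ) ^ 2 * ((t : ℕ × ℕ).2 : ℝ) ^ 2) := fun t => by positivity
  have hfc := hfs.hasSum
  -- Step D : product over ℕ × T via the scaling equivalence
  have hprod := hasSum_odd_four_inv.mul hfc
    (Summable.mul_of_nonneg hasSum_odd_four_inv.summable hfs h4 hfnonneg)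
  have hcomp : ((fun x : {pq : ℕ × ℕ // Odd pq.1 ∧ Odd pq.2} =>
      1 / ((x.1.1 : ℝ) ^ 2 * (x.1.2 : ℝ) ^ 2)) ∘ coprimeScaleEquiv) =
      fun x : ℕ × {pq : ℕ × ℕ // Odd pq.1 ∧ Odd pq.2 ∧ Nat.gcd pq.1 pq.2 = 1} =>
        (1 : ℝ) / ((2 * x.1 + 1 : ℕ) : ℝ) ^ 4 *
          (1 / (((x.2 : ℕ × ℕ).1 : ℝ) ^ 2 * ((x.2 : ℕ × ℕ).2 : ℝ) ^ 2)) := by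
    funext x
    obtain ⟨k, ⟨⟨p, q⟩, hp, hq, hg⟩⟩ := x
    simp only [Function.comp, coprimeScaleEquiv, Equiv.ofBijective_apply]
    change (1:ℝ) / ((((2*k+1)*p : ℕ) : ℝ)^2 * (((2*k+1)*q : ℕ) : ℝ)^2) = _
    have hk0 : ((2 * k + 1 : ℕ) : ℝ) ≠ 0 := by positivity
    push_cast
    field_simp
  have hF2 : HasSum ((fun x : {pq : ℕ × ℕ // Odd pq.1 ∧ Odd pq.2} =>
      1 / ((x.1.1 : ℝ) ^ 2 * (x.1.2 : ℝ) ^ 2)) ∘ coprimeScaleEquiv) (π ^ 4 / 64) :=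
    (coprimeScaleEquiv.hasSum_iff).2 hFsum
  rw [hcomp] at hF2
  have huniq := hprod.unique hF2
  have hπ : (π : ℝ) ^ 4 ≠ 0 := pow_ne_zero _ pi_ne_zero
  have hcval : (∑' pq : {pq : ℕ × ℕ // Odd pq.1 ∧ Odd pq.2 ∧ Nat.gcd pq.1 pq.2 = 1},
      1 / (((pq : ℕ × ℕ).1 : ℝ) ^ 2 * ((pq : ℕ × ℕ).2 : ℝ) ^ 2)) = 3 / 2 := by
    set cc := ∑' pq : {pq : ℕ × ℕ // Odd pq.1 ∧ Odd pq.2 ∧ Nat.gcd pq.1 pq.2 = 1},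
      1 / (((pq : ℕ × ℕ).1 : ℝ) ^ 2 * ((pq : ℕ × ℕ).2 : ℝ) ^ 2) with hccdef
    have h96 : π ^ 4 * cc = π ^ 4 * (3 / 2) := by linarith
    exact mul_left_cancel₀ hπ h96
  rw [hcval] at hfc
  exact hfc
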